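/- For λ ∈ {-1,1}^n let i_λ denote the number of -1 entries of λ and S(λ) = {s ∈ [1,n] : λ_1+⋯+λ_s > 0}. Then the total signed weight Σ_{λ : S(λ) = ∅, λ_1+⋯+λ_n ≥ 0} (-1)^{n-i_λ} x^{n-2i_λ} equals (-1)^{n/2} C_{n/2} if n is even, and 0 if n is odd, where C_m is the m-th Catalan number. -/

import Mathlib

open Polynomial

/-- The step `λ_i ∈ {-1,1}` encoded by a boolean: `true ↦ 1`, `false ↦ -1`. -/
def step {n : ℕ} (f : Fin n → Bool) (i : Fin n) : ℤ := if f i then 1 else -1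

/-- The number `i_λ` of `-1` entries of `λ`. -/
def negCount {n : ℕ} (f : Fin n → Bool) : ℕ :=
  (Finset.univ.filter (fun i : Fin n => f i = false)).card

open List DyckStep

lemma count_take_ofFn {α : Type*} [DecidableEq α] {n : ℕ} (v : Fin n → α) (x : α) (k : ℕ) :
    ((List.ofFn v).take k).count x
      = (Finset.univ.filter (fun j : Fin n => (j : ℕ) < k ∧ v j = x)).card := by
  induction k with
  | zero => simp
  | succ m ih =>
    rw [List.take_succ, List.count_append, ih]
    rcases lt_or_ge m n with h | h
    · rw [List.getElem?_eq_getElem (by simpa using h), List.getElem_ofFn]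
      have hsplit : (Finset.univ.filter fun j : Fin n => (j : ℕ) < m + 1 ∧ v j = x)
          = (Finset.univ.filter fun j : Fin n => (j : ℕ) < m ∧ v j = x)
            ∪ (Finset.univ.filter fun j : Fin n => j = ⟨m, h⟩ ∧ v j = x) := by
        ext j
        simp only [Finset.mem_union, Finset.mem_filter, Finset.mem_univ, true_and, Fin.ext_iff]
        by_cases hv : v j = x <;> simp [hv] <;> omega
      rw [hsplit, Finset.card_union_of_disjoint]
      · congr 1
        by_cases hv : v ⟨m, h⟩ = x
        · rw [show (Finset.univ.filter fun j : Fin n => j = ⟨m, h⟩ ∧ v j = x) = {⟨m, h⟩} by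
            ext j; simp only [Finset.mem_filter, Finset.mem_univ, true_and, Finset.mem_singleton]
            constructor
            · rintro ⟨hj, -⟩; exact hj
            · rintro rfl; exact ⟨rfl, hv⟩]
          simp [hv]
        · rw [show (Finset.univ.filter fun j : Fin n => j = ⟨m, h⟩ ∧ v j = x) = ∅ by
            ext j; simp only [Finset.mem_filter, Finset.mem_univ, true_and,
              Finset.notMem_empty, iff_false, not_and]
            rintro rfl; exact hv]
          simp [List.count_singleton', hv]
      · rw [Finset.disjoint_left]
        rintro j hj1 hj2
        simp only [Finset.mem_filter, Finset.mem_univ, true_and] at hj1 hj2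
        obtain ⟨rfl, -⟩ := hj2
        simp at hj1
    · rw [List.getElem?_eq_none (by simpa using h)]
      simp only [Option.toList_none, List.count_nil, add_zero]
      congr 1
      apply Finset.filter_congr
      intro j _
      have := j.isLt
      by_cases hv : v j = x <;> simp [hv] <;> omega

def toL {n : ℕ} (f : Fin n → Bool) : List DyckStep :=
  List.ofFn fun i => if f i then D else U

lemma sum_step_eq {n : ℕ} (f : Fin n → Bool) (k : ℕ) :
    ∑ j ∈ Finset.univ.filter (fun j : Fin n => (j : ℕ) < k), step f j
      = ((Finset.univ.filter (fun j : Fin n => (j : ℕ) < k ∧ f j = true)).card : ℤ)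
        - ((Finset.univ.filter (fun j : Fin n => (j : ℕ) < k ∧ f j = false)).card : ℤ) := by
  have : ∀ j : Fin n, step f j
      = (if f j = true then (1 : ℤ) else 0) - (if f j = false then (1 : ℤ) else 0) := by
    intro j; cases h : f j <;> simp [step, h]
  rw [Finset.sum_congr rfl fun j _ => this j, Finset.sum_sub_distrib,
    Finset.sum_boole, Finset.sum_boole, Finset.filter_filter, Finset.filter_filter]

lemma count_D_toL {n : ℕ} (f : Fin n → Bool) (k : ℕ) :
    ((toL f).take k).count D
      = (Finset.univ.filter (fun j : Fin n => (j : ℕ) < k ∧ f j = true)).card := by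
  rw [show toL f = List.ofFn fun i => if f i then D else U from rfl, count_take_ofFn]
  congr 1
  apply Finset.filter_congr
  intro j _
  cases h : f j <;> simp [h]

lemma count_U_toL {n : ℕ} (f : Fin n → Bool) (k : ℕ) :
    ((toL f).take k).count U
      = (Finset.univ.filter (fun j : Fin n => (j : ℕ) < k ∧ f j = false)).card := by
  rw [show toL f = List.ofFn fun i => if f i then D else U from rfl, count_take_ofFn]
  congr 1
  apply Finset.filter_congr
  intro j _
  cases h : f j <;> simp [h]

lemma sum_step_count {n : ℕ} (f : Fin n → Bool) (k : ℕ) :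
    ∑ j ∈ Finset.univ.filter (fun j : Fin n => (j : ℕ) < k), step f j
      = (((toL f).take k).count D : ℤ) - (((toL f).take k).count U : ℤ) := by
  rw [sum_step_eq, count_D_toL, count_U_toL]

/-- The condition on `f` in the theorem. -/
def Cond {n : ℕ} (f : Fin n → Bool) : Prop :=
  (∀ i : Fin n, ∑ j ∈ Finset.Iic i, step f j ≤ 0) ∧ 0 ≤ ∑ j : Fin n, step f j

instance {n : ℕ} : DecidablePred (Cond (n := n)) := fun f => by unfold Cond; infer_instance

lemma Iic_eq {n : ℕ} (i : Fin n) :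
    Finset.Iic i = Finset.univ.filter (fun j : Fin n => (j : ℕ) < (i : ℕ) + 1) := by
  ext j
  simp only [Finset.mem_Iic, Finset.mem_filter, Finset.mem_univ, true_and, Fin.le_def]
  omega

lemma univ_eq {n : ℕ} :
    (Finset.univ : Finset (Fin n)) = Finset.univ.filter (fun j : Fin n => (j : ℕ) < n) := by
  ext j
  simp [j.isLt]

lemma cond_all_k {n : ℕ} {f : Fin n → Bool} (hf : Cond f) (k : ℕ) :
    ∑ j ∈ Finset.univ.filter (fun j : Fin n => (j : ℕ) < k), step f j ≤ 0 := by
  rcases Nat.eq_zero_or_pos k with rfl | hk0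
  · simp
  rcases Nat.eq_zero_or_pos n with rfl | hn0
  · simp
  rcases le_or_gt n k with h | h
  · have he : (Finset.univ.filter (fun j : Fin n => (j : ℕ) < k))
        = Finset.Iic (⟨n - 1, by omega⟩ : Fin n) := by
      rw [Iic_eq]
      apply Finset.filter_congr
      intro j _
      have := j.isLt
      simp only [eq_iff_iff]
      omega
    rw [he]; exact hf.1 _
  · have he : (Finset.univ.filter (fun j : Fin n => (j : ℕ) < k))
        = Finset.Iic (⟨k - 1, by omega⟩ : Fin n) := by
      rw [Iic_eq]
      apply Finset.filter_congr
      intro j _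
      simp only [eq_iff_iff]
      omega
    rw [he]; exact hf.1 _

lemma cond_total {n : ℕ} {f : Fin n → Bool} (hf : Cond f) :
    ∑ j : Fin n, step f j = 0 := by
  have h1 := cond_all_k hf n
  rw [← univ_eq] at h1
  exact le_antisymm h1 hf.2

/-- The Dyck word associated to `f` satisfying `Cond`. -/
def toDyck {n : ℕ} (f : Fin n → Bool) (hf : Cond f) : DyckWord where
  toList := toL f
  count_U_eq_count_D := by
    have h := cond_total hf
    rw [univ_eq, sum_step_count] at h
    have hl : (toL f).take n = toL f := by
      apply List.take_of_length_le
      simp [toL]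
    rw [hl] at h
    omega
  count_D_le_count_U := fun k => by
    have h := cond_all_k hf k
    rw [sum_step_count] at h
    omega

lemma toDyck_length {n : ℕ} (f : Fin n → Bool) (hf : Cond f) :
    (toDyck f hf).toList.length = n := by
  simp [toDyck, toL]

/-- Recover `f` from a list of length `n`. -/
def ofList {n : ℕ} (l : List DyckStep) (hl : l.length = n) : Fin n → Bool :=
  fun i => decide (l[(i : ℕ)]'(by rw [hl]; exact i.isLt) = D)

lemma toL_ofList {n : ℕ} (l : List DyckStep) (hl : l.length = n) :
    toL (ofList l hl) = l := by
  apply List.ext_getElem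
  · simp [toL, hl]
  · intro i h1 h2
    simp only [toL, List.getElem_ofFn]
    rcases (l[i]'h2).dichotomy with h | h <;> simp [ofList, h]

lemma cond_ofList {n : ℕ} (p : DyckWord) (hl : p.toList.length = n) :
    Cond (ofList p.toList hl) := by
  constructor
  · intro i
    rw [Iic_eq, sum_step_count, toL_ofList]
    have := p.count_D_le_count_U ((i : ℕ) + 1)
    omega
  · rw [univ_eq, sum_step_count, toL_ofList]
    have h2 : p.toList.take n = p.toList := List.take_of_length_le (by omega)
    rw [h2]
    have := p.count_U_eq_count_D
    omega

/-- The bijection between valid `f`s and Dyck words of length `n`. -/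
def condEquiv (n : ℕ) :
    {f : Fin n → Bool // Cond f} ≃ {p : DyckWord // p.toList.length = n} where
  toFun f := ⟨toDyck f.1 f.2, toDyck_length f.1 f.2⟩
  invFun p := ⟨ofList p.1.toList p.2, cond_ofList p.1 p.2⟩
  left_inv f := by
    ext i
    show decide ((toL f.1)[(i : ℕ)]'_ = D) = f.1 i
    simp only [toL, List.getElem_ofFn]
    cases h : f.1 i <;> simp [h]
  right_inv p := by
    ext1
    ext1
    exact toL_ofList p.1.toList p.2

lemma card_cond (n : ℕ) :
    (Finset.univ.filter (Cond (n := n))).card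
      = if Even n then catalan (n / 2) else 0 := by
  rw [← Fintype.card_subtype]
  by_cases hn : Even n
  · obtain ⟨m, hm⟩ := hn
    have e2 : {p : DyckWord // p.toList.length = n} ≃ {p : DyckWord // p.semilength = n / 2} :=
      Equiv.subtypeEquivRight fun p => by
        rw [← p.two_mul_semilength_eq_length]
        omega
    rw [Fintype.card_congr ((condEquiv n).trans e2),
      DyckWord.card_dyckWord_semilength_eq_catalan, if_pos ⟨m, hm⟩]
  · rw [if_neg hn]
    have he : IsEmpty {p : DyckWord // p.toList.length = n} := by
      refine ⟨fun p => hn ?_⟩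
      rw [← p.2, ← p.1.two_mul_semilength_eq_length]
      exact ⟨_, by ring⟩
    have : IsEmpty {f : Fin n → Bool // Cond f} := (condEquiv n).isEmpty
    exact Fintype.card_eq_zero

lemma negCount_eq {n : ℕ} {f : Fin n → Bool} (hf : Cond f) :
    2 * negCount f = n := by
  have h := cond_total hf
  rw [univ_eq, sum_step_eq] at h
  have hsum : (Finset.univ.filter (fun j : Fin n => (j : ℕ) < n ∧ f j = true)).card
      + (Finset.univ.filter (fun j : Fin n => (j : ℕ) < n ∧ f j = false)).card = n := by
    rw [← Finset.card_union_of_disjoint]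
    · rw [show (Finset.univ.filter (fun j : Fin n => (j : ℕ) < n ∧ f j = true))
          ∪ (Finset.univ.filter (fun j : Fin n => (j : ℕ) < n ∧ f j = false))
          = Finset.univ by
        ext j
        have := j.isLt
        cases hj : f j <;> simp [hj, this]]
      simp
    · rw [Finset.disjoint_left]
      rintro j hj1 hj2
      simp only [Finset.mem_filter] at hj1 hj2
      rw [hj1.2.2] at hj2
      simp at hj2
  have hneg : negCount f
      = (Finset.univ.filter (fun j : Fin n => (j : ℕ) < n ∧ f j = false)).card := by
    rw [negCount]
    congr 1
    apply Finset.filter_congr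
    intro j _
    simp [j.isLt]
  omega

/-- The total signed weight `Σ_{λ : S(λ) = ∅, λ_1+⋯+λ_n ≥ 0} (-1)^{n-i_λ} x^{n-2i_λ}`
over `λ ∈ {-1,1}^n` (where `S(λ) = {s : λ_1+⋯+λ_s > 0}`) equals `(-1)^{n/2} C_{n/2}`
for even `n` and `0` for odd `n`, where `C_m` is the `m`-th Catalan number. -/
theorem stmt19 (n : ℕ) :
    ∑ f ∈ Finset.univ.filter
        (fun f : Fin n → Bool =>
          (∀ i : Fin n, ∑ j ∈ Finset.Iic i, step f j ≤ 0) ∧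
            0 ≤ ∑ j : Fin n, step f j),
      Polynomial.C ((-1 : ℚ) ^ (n - negCount f)) * Polynomial.X ^ (n - 2 * negCount f)
    = if Even n then Polynomial.C ((-1 : ℚ) ^ (n / 2) * (catalan (n / 2) : ℚ)) else 0 := by
  have hset : (Finset.univ.filter
      (fun f : Fin n → Bool =>
        (∀ i : Fin n, ∑ j ∈ Finset.Iic i, step f j ≤ 0) ∧ 0 ≤ ∑ j : Fin n, step f j))
      = Finset.univ.filter (Cond (n := n)) := by
    apply Finset.filter_congr
    intro f _
    rfl
  rw [hset]
  have hterm : ∀ f ∈ Finset.univ.filter (Cond (n := n)),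
      Polynomial.C ((-1 : ℚ) ^ (n - negCount f)) * Polynomial.X ^ (n - 2 * negCount f)
        = Polynomial.C ((-1 : ℚ) ^ (n / 2)) := by
    intro f hf
    rw [Finset.mem_filter] at hf
    have h2 := negCount_eq hf.2
    have hnc : n - negCount f = n / 2 := by omega
    have hzero : n - 2 * negCount f = 0 := by omega
    rw [hnc, hzero, pow_zero, mul_one]
  rw [Finset.sum_congr rfl hterm, Finset.sum_const, card_cond]
  by_cases hn : Even n
  · rw [if_pos hn, if_pos hn, nsmul_eq_mul, ← Polynomial.C_eq_natCast, ← Polynomial.C_mul,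
      mul_comm]
  · rw [if_neg hn, if_neg hn, zero_smul]
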